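/- Let PG_n be the path graph on n vertices with unit edge weights, and let L be its graph Laplacian. Then the partition function Z_{PG_n}(q) = det(qI − L) satisfies Z_{PG_n}(q) = ∑_{k=1}^{n} C(n+k−1, 2k−1) · q^k for all q, where C(a,b) denotes the binomial coefficient. -/

import Mathlib

open Classical Finset

noncomputable section

/-- The graph Laplacian `L = A - D` of the weighted directed graph with edge relation `E`
and weights `w`: `A x y = w x y · 1_{E x y, x ≠ y}` and `D` is the diagonal matrix of
total outgoing weights. -/
def lapOf {V : Type*} [Fintype V] [DecidableEq V] (E : V → V → Prop) (w : V → V → ℝ) :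
    Matrix V V ℝ := fun x y =>
  (if E x y ∧ x ≠ y then w x y else 0) -
    (if x = y then ∑ z : V, (if E x z ∧ x ≠ z then w x z else 0) else 0)

/-- The partition function `Z(q) = det (q·I - L)` (matrix-forest theorem). -/
def Zdet {V : Type*} [Fintype V] [DecidableEq V] (E : V → V → Prop) (w : V → V → ℝ)
    (q : ℝ) : ℝ := (q • (1 : Matrix V V ℝ) - lapOf E w).det

/-- The path graph on `n` vertices: `i` and `i+1` are adjacent. -/
def pathAdj (n : ℕ) : Fin n → Fin n → Prop := fun i j =>
  (i : ℕ) + 1 = (j : ℕ) ∨ (j : ℕ) + 1 = (i : ℕ)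

/-! ### Auxiliary material: tridiagonal determinants -/

/-- Tridiagonal matrix with diagonal `d` and off-diagonal entries `-1`. -/
def Tm (n : ℕ) (d : Fin n → ℝ) : Matrix (Fin n) (Fin n) ℝ := fun i j =>
  if (i : ℕ) = j then d i
  else if (i : ℕ) + 1 = j ∨ (j : ℕ) + 1 = i then -1 else 0

set_option linter.unreachableTactic false in
set_option linter.unusedTactic false in
lemma Tm_rec (n : ℕ) (d : Fin (n+2) → ℝ) :
    (Tm (n+2) d).det =
      d 0 * (Tm (n+1) (fun i => d i.succ)).det - (Tm n (fun i => d i.succ.succ)).det := by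
  rw [Matrix.det_succ_row_zero, Fin.sum_univ_succ, Fin.sum_univ_succ]
  have h0 : (Tm (n+2) d).submatrix Fin.succ ((0 : Fin (n+2)).succAbove)
      = Tm (n+1) (fun i => d i.succ) := by
    rw [Fin.succAbove_zero]
    ext i j
    simp only [Matrix.submatrix_apply, Tm, Fin.val_succ]
    split_ifs <;>
      first | rfl | tauto | (exfalso; omega) |
        (exfalso; simp_all only [Fin.val_succ, false_or, or_false]; omega)
  have e0 : ((1 : Fin (n+2)).succAbove 0) = 0 := by
    rw [Fin.succAbove_of_castSucc_lt] <;> simp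
  have h1 : ∀ i : Fin (n+1), ((Tm (n+2) d).submatrix Fin.succ ((1 : Fin (n+2)).succAbove)) i 0
      = if (i : ℕ) = 0 then -1 else 0 := by
    intro i
    simp only [Matrix.submatrix_apply, e0, Tm, Fin.val_succ,
      show ((0 : Fin (n+2)) : ℕ) = 0 from rfl]
    split_ifs <;>
      first | rfl | tauto | (exfalso; omega) |
        (exfalso; simp_all only [Fin.val_succ, false_or, or_false]; omega)
  have h2 : ((Tm (n+2) d).submatrix Fin.succ ((1 : Fin (n+2)).succAbove)).submatrix
      Fin.succ Fin.succ = Tm n (fun i => d i.succ.succ) := by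
    ext i j
    have e1 : ((1 : Fin (n+2)).succAbove j.succ) = j.succ.succ :=
      Fin.succAbove_of_le_castSucc _ _ (by simp [Fin.le_def])
    simp only [Matrix.submatrix_apply, e1, Tm, Fin.val_succ]
    split_ifs <;>
      first | rfl | tauto | (exfalso; omega) |
        (exfalso; simp_all only [Fin.val_succ, false_or, or_false]; omega)
  have hz : ∀ j : Fin n, (Tm (n+2) d) 0 j.succ.succ = 0 := by
    intro j
    simp only [Tm, Fin.val_succ, show ((0 : Fin (n+2)) : ℕ) = 0 from rfl]
    split_ifs <;>
      first | rfl | tauto | (exfalso; omega) |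
        (exfalso; simp_all only [Fin.val_succ, false_or, or_false]; omega)
  have hrest : ∑ j : Fin n,
      (-1 : ℝ) ^ ((j.succ.succ : Fin (n+2)) : ℕ) * (Tm (n+2) d) 0 j.succ.succ *
        ((Tm (n+2) d).submatrix Fin.succ (Fin.succAbove j.succ.succ)).det = 0 := by
    apply Finset.sum_eq_zero
    intro j _
    rw [hz j]; ring
  rw [hrest]
  have hdet1 : ((Tm (n+2) d).submatrix Fin.succ ((1 : Fin (n+2)).succAbove)).det
      = -(Tm n (fun i => d i.succ.succ)).det := by
    rw [Matrix.det_succ_column_zero, Fin.sum_univ_succ]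
    have hz2 : ∀ i : Fin n,
        ((Tm (n+2) d).submatrix Fin.succ ((1 : Fin (n+2)).succAbove)) i.succ 0 = 0 := by
      intro i; rw [h1]; simp
    have hrest2 : ∑ i : Fin n, (-1 : ℝ) ^ ((i.succ : Fin (n+1)) : ℕ) *
        ((Tm (n+2) d).submatrix Fin.succ ((1 : Fin (n+2)).succAbove)) i.succ 0 *
        (((Tm (n+2) d).submatrix Fin.succ ((1 : Fin (n+2)).succAbove)).submatrix
          (Fin.succAbove i.succ) Fin.succ).det = 0 := by
      apply Finset.sum_eq_zero
      intro i _
      rw [hz2 i]; ring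
    rw [hrest2, h1, Fin.succAbove_zero, h2]
    simp
  have hM00 : (Tm (n+2) d) 0 0 = d 0 := by
    simp [Tm]
  have hM01 : (Tm (n+2) d) 0 1 = -1 := by
    simp only [Tm, show ((0 : Fin (n+2)) : ℕ) = 0 from rfl,
      show ((1 : Fin (n+2)) : ℕ) = 1 from rfl]
    norm_num
  rw [show (Fin.succ (0 : Fin (n+1))) = (1 : Fin (n+2)) from Fin.succ_zero_eq_one]
  rw [h0, hdet1, hM00, hM01]
  simp only [show ((0 : Fin (n+2)) : ℕ) = 0 from rfl, show ((1 : Fin (n+2)) : ℕ) = 1 from rfl]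
  ring

/-! ### The combinatorial polynomial -/

def Spoly (q : ℝ) (n : ℕ) : ℝ := ∑ k ∈ Finset.range (n+1), ((n+k).choose (2*k) : ℝ) * q ^ k

lemma choose_id (n k : ℕ) :
    (n+k+3).choose (2*k+2) + (n+k+1).choose (2*k+2)
      = (n+k+1).choose (2*k) + 2 * ((n+k+2).choose (2*k+2)) := by
  have h1 : (n+k+3).choose (2*k+2) = (n+k+2).choose (2*k+1) + (n+k+2).choose (2*k+2) :=
    Nat.choose_succ_succ' (n+k+2) (2*k+1)
  have h2 : (n+k+2).choose (2*k+1) = (n+k+1).choose (2*k) + (n+k+1).choose (2*k+1) :=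
    Nat.choose_succ_succ' (n+k+1) (2*k)
  have h3 : (n+k+2).choose (2*k+2) = (n+k+1).choose (2*k+1) + (n+k+1).choose (2*k+2) :=
    Nat.choose_succ_succ' (n+k+1) (2*k+1)
  omega

lemma Spoly_zero (q : ℝ) : Spoly q 0 = 1 := by simp [Spoly]

lemma Spoly_one (q : ℝ) : Spoly q 1 = q + 1 := by
  simp [Spoly, Finset.sum_range_succ]; ring

lemma Spoly_ext (q : ℝ) (n m : ℕ) (h : n + 1 ≤ m) :
    Spoly q n = ∑ k ∈ Finset.range m, ((n+k).choose (2*k) : ℝ) * q ^ k := by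
  rw [Spoly, ← Finset.sum_range_add_sum_Ico _ h]
  have : ∑ k ∈ Finset.Ico (n+1) m, ((n+k).choose (2*k) : ℝ) * q ^ k = 0 := by
    apply Finset.sum_eq_zero
    intro k hk
    rw [Finset.mem_Ico] at hk
    rw [Nat.choose_eq_zero_of_lt (by omega)]
    simp
  rw [this, add_zero]

lemma Spoly_peel (q : ℝ) (n m : ℕ) (h : n + 1 ≤ m + 1) :
    Spoly q n = 1 + ∑ k ∈ Finset.range m, ((n+k+1).choose (2*k+2) : ℝ) * q ^ (k+1) := by
  rw [Spoly_ext q n (m+1) h,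
    Finset.sum_range_succ' (fun k => ((n+k).choose (2*k) : ℝ) * q ^ k) m]
  have : ((n+0).choose (2*0) : ℝ) * q ^ 0 = 1 := by simp
  have hs : ∑ k ∈ Finset.range m, ((n+(k+1)).choose (2*(k+1)) : ℝ) * q ^ (k+1)
      = ∑ k ∈ Finset.range m, ((n+k+1).choose (2*k+2) : ℝ) * q ^ (k+1) :=
    Finset.sum_congr rfl (fun k _ => by
      rw [show n+(k+1) = n+k+1 by ring, show 2*(k+1) = 2*k+2 by ring])
  rw [this, hs, add_comm]

lemma Spoly_rec (q : ℝ) (n : ℕ) :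
    Spoly q (n+2) = (q+2) * Spoly q (n+1) - Spoly q n := by
  have e2 : Spoly q (n+2) = 1 + ∑ k ∈ Finset.range (n+3),
      ((n+k+3).choose (2*k+2) : ℝ) * q ^ (k+1) := by
    rw [Spoly_peel q (n+2) (n+3) (by omega)]
    congr 1
    apply Finset.sum_congr rfl
    intro k _
    rw [show n+2+k+1 = n+k+3 from by omega]
  have e1 : Spoly q (n+1) = ∑ k ∈ Finset.range (n+3),
      ((n+k+1).choose (2*k) : ℝ) * q ^ k := by
    rw [Spoly_ext q (n+1) (n+3) (by omega)]
    apply Finset.sum_congr rfl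
    intro k _
    rw [show n+1+k = n+k+1 from by omega]
  have e1' : Spoly q (n+1) = 1 + ∑ k ∈ Finset.range (n+3),
      ((n+k+2).choose (2*k+2) : ℝ) * q ^ (k+1) := by
    rw [Spoly_peel q (n+1) (n+3) (by omega)]
    congr 1
    apply Finset.sum_congr rfl
    intro k _
    rw [show n+1+k+1 = n+k+2 from by omega]
  have e0 : Spoly q n = 1 + ∑ k ∈ Finset.range (n+3),
      ((n+k+1).choose (2*k+2) : ℝ) * q ^ (k+1) := by
    rw [Spoly_peel q n (n+3) (by omega)]
  have key : ∑ k ∈ Finset.range (n+3), ((n+k+3).choose (2*k+2) : ℝ) * q ^ (k+1)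
      + ∑ k ∈ Finset.range (n+3), ((n+k+1).choose (2*k+2) : ℝ) * q ^ (k+1)
      = q * (∑ k ∈ Finset.range (n+3), ((n+k+1).choose (2*k) : ℝ) * q ^ k)
      + 2 * ∑ k ∈ Finset.range (n+3), ((n+k+2).choose (2*k+2) : ℝ) * q ^ (k+1) := by
    rw [Finset.mul_sum, Finset.mul_sum, ← Finset.sum_add_distrib, ← Finset.sum_add_distrib]
    apply Finset.sum_congr rfl
    intro k _
    have hc := choose_id n k
    have hc' : ((n+k+3).choose (2*k+2) : ℝ) + ((n+k+1).choose (2*k+2) : ℝ)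
        = ((n+k+1).choose (2*k) : ℝ) + 2 * ((n+k+2).choose (2*k+2) : ℝ) := by
      exact_mod_cast congrArg (Nat.cast : ℕ → ℝ) hc
    linear_combination q^(k+1) * hc'
  rw [e2, e0, show (q+2)*Spoly q (n+1) = q*Spoly q (n+1) + 2*Spoly q (n+1) from by ring]
  nth_rewrite 1 [e1]
  rw [e1']
  linarith [key]

/-! ### The determinant `Bdet` -/

def dB (q : ℝ) (n : ℕ) : Fin n → ℝ := fun i => if (i : ℕ) + 1 = n then q+1 else q+2

def Bdet (q : ℝ) (n : ℕ) : ℝ := (Tm n (dB q n)).det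

lemma Bdet_zero (q : ℝ) : Bdet q 0 = 1 := by
  simp [Bdet, Matrix.det_fin_zero]

lemma Bdet_one (q : ℝ) : Bdet q 1 = q + 1 := by
  simp [Bdet, Matrix.det_fin_one, Tm, dB]

lemma Bdet_rec (q : ℝ) (n : ℕ) : Bdet q (n+2) = (q+2) * Bdet q (n+1) - Bdet q n := by
  unfold Bdet
  rw [Tm_rec]
  have hd0 : dB q (n+2) 0 = q + 2 := by
    simp only [dB, show ((0 : Fin (n+2)) : ℕ) = 0 from rfl]
    rw [if_neg (by omega)]
  have hs1 : (fun i : Fin (n+1) => dB q (n+2) i.succ) = dB q (n+1) := by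
    funext i
    simp only [dB, Fin.val_succ]
    split_ifs <;>
      first | rfl | (exfalso; omega) | (exfalso; simp_all only [false_or, or_false]; omega)
  have hs2 : (fun i : Fin n => dB q (n+2) i.succ.succ) = dB q n := by
    funext i
    simp only [dB, Fin.val_succ]
    split_ifs <;>
      first | rfl | (exfalso; omega) | (exfalso; simp_all only [false_or, or_false]; omega)
  rw [hd0, hs1, hs2]

lemma Bdet_eq_Spoly (q : ℝ) : ∀ n, Bdet q n = Spoly q n := by
  intro n
  induction n using Nat.twoStepInduction with
  | zero => rw [Bdet_zero, Spoly_zero]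
  | one => rw [Bdet_one, Spoly_one]
  | more n ih1 ih2 => rw [Bdet_rec, Spoly_rec, ih1, ih2]

/-! ### Pascal step: difference of consecutive `Spoly` -/

lemma Spoly_diff (q : ℝ) (m : ℕ) :
    Spoly q (m+1) - Spoly q m
      = ∑ k ∈ Finset.Icc 1 (m+1), (((m+1) + k - 1).choose (2*k-1) : ℝ) * q ^ k := by
  have hL : Spoly q (m+1) - Spoly q m
      = ∑ k ∈ Finset.range (m+1), ((m+k+1).choose (2*k+1) : ℝ) * q ^ (k+1) := by
    rw [Spoly_peel q (m+1) (m+1) (by omega), Spoly_peel q m (m+1) (by omega)]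
    have : (1 + ∑ k ∈ Finset.range (m+1), ((m+1+k+1).choose (2*k+2) : ℝ) * q ^ (k+1))
        - (1 + ∑ k ∈ Finset.range (m+1), ((m+k+1).choose (2*k+2) : ℝ) * q ^ (k+1))
        = ∑ k ∈ Finset.range (m+1),
            (((m+1+k+1).choose (2*k+2) : ℝ) * q ^ (k+1)
              - ((m+k+1).choose (2*k+2) : ℝ) * q ^ (k+1)) := by
      rw [Finset.sum_sub_distrib]; ring
    rw [this]
    apply Finset.sum_congr rfl
    intro k _
    have hc : (m+1+k+1).choose (2*k+2) = (m+k+1).choose (2*k+1) + (m+k+1).choose (2*k+2) := by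
      rw [show m+1+k+1 = (m+k+1)+1 from by omega]
      exact Nat.choose_succ_succ' (m+k+1) (2*k+1)
    have hc' : ((m+1+k+1).choose (2*k+2) : ℝ)
        = ((m+k+1).choose (2*k+1) : ℝ) + ((m+k+1).choose (2*k+2) : ℝ) := by
      exact_mod_cast congrArg (Nat.cast : ℕ → ℝ) hc
    linear_combination q^(k+1) * hc'
  rw [hL, show Finset.Icc 1 (m+1) = Finset.Ico 1 (m+2) from by
    exact (Finset.Ico_add_one_right_eq_Icc (a := 1) (b := m+1)).symm]
  rw [Finset.sum_Ico_eq_sum_range]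
  apply Finset.sum_congr (by norm_num)
  intro k hk
  rw [show m+1+(1+k)-1 = m+k+1 from by omega, show 2*(1+k)-1 = 2*k+1 from by omega,
    show (1+k) = k+1 from by omega]

/-! ### Identifying the path-graph matrix with a tridiagonal matrix -/

lemma deg_sum (n : ℕ) (x : Fin n) :
    (∑ z : Fin n, (if pathAdj n x z ∧ x ≠ z then (1:ℝ) else 0))
      = (if (x : ℕ) + 1 < n then 1 else 0) + (if 0 < (x : ℕ) then 1 else 0) := by
  have split : ∀ z : Fin n, (if pathAdj n x z ∧ x ≠ z then (1:ℝ) else 0)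
      = (if (x : ℕ) + 1 = (z : ℕ) then 1 else 0) + (if (z : ℕ) + 1 = (x : ℕ) then 1 else 0) := by
    intro z
    simp only [pathAdj, ne_eq, Fin.ext_iff]
    split_ifs <;> (try norm_num) <;> omega
  rw [Finset.sum_congr rfl (fun z _ => split z), Finset.sum_add_distrib]
  have s1 : ∑ z : Fin n, (if (x : ℕ) + 1 = (z : ℕ) then (1:ℝ) else 0)
      = if (x : ℕ) + 1 < n then 1 else 0 := by
    by_cases h : (x : ℕ) + 1 < n
    · rw [if_pos h]
      rw [Finset.sum_eq_single_of_mem (⟨(x : ℕ) + 1, h⟩ : Fin n) (Finset.mem_univ _)]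
      · simp
      · intro b _ hb
        rw [if_neg]
        intro hc
        exact hb (Fin.ext hc.symm)
    · rw [if_neg h]
      apply Finset.sum_eq_zero
      intro z _
      rw [if_neg]
      have := z.isLt
      omega
  have s2 : ∑ z : Fin n, (if (z : ℕ) + 1 = (x : ℕ) then (1:ℝ) else 0)
      = if 0 < (x : ℕ) then 1 else 0 := by
    by_cases h : 0 < (x : ℕ)
    · rw [if_pos h]
      have hlt : (x : ℕ) - 1 < n := by have := x.isLt; omega
      rw [Finset.sum_eq_single_of_mem (⟨(x : ℕ) - 1, hlt⟩ : Fin n) (Finset.mem_univ _)]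
      · rw [if_pos]
        simp only
        omega
      · intro b _ hb
        rw [if_neg]
        intro hc
        exact hb (Fin.ext (by simp only; omega))
    · rw [if_neg h]
      apply Finset.sum_eq_zero
      intro z _
      rw [if_neg]
      omega
  rw [s1, s2]

lemma matrix_eq (n : ℕ) (hn : 2 ≤ n) (q : ℝ) :
    q • (1 : Matrix (Fin n) (Fin n) ℝ) - lapOf (pathAdj n) (fun _ _ => (1:ℝ))
      = Tm n (fun i => if (i : ℕ) = 0 ∨ (i : ℕ) + 1 = n then q+1 else q+2) := by
  ext i j
  simp only [Matrix.sub_apply, Matrix.smul_apply, Matrix.one_apply, lapOf, smul_eq_mul, Tm]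
  by_cases hij : i = j
  · subst hij
    rw [if_pos rfl, if_pos rfl, if_pos rfl, if_neg (by simp [pathAdj])]
    rw [deg_sum n i]
    have hb := i.isLt
    split_ifs <;> first | (exfalso; omega) | ring
  · have hv : (i : ℕ) ≠ (j : ℕ) := fun h => hij (Fin.ext h)
    rw [if_neg hij, if_neg hij, if_neg hv]
    simp only [pathAdj, ne_eq, Fin.ext_iff]
    split_ifs <;> first | (exfalso; omega) | ring

/-! ### Main theorem -/

/-- **Partition function of path graphs (combinatorial form).**
`Z_{PG_n}(q) = ∑_{k=1}^{n} C(n+k-1, 2k-1) q^k`. -/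
theorem path_partition_combinatorial (n : ℕ) (hn : 0 < n) (q : ℝ) :
    Zdet (pathAdj n) (fun _ _ => (1 : ℝ)) q =
      ∑ k ∈ Finset.Icc 1 n, ((n + k - 1).choose (2 * k - 1) : ℝ) * q ^ k := by
  match n, hn with
  | 1, _ =>
    have h1 : Zdet (pathAdj 1) (fun _ _ => (1 : ℝ)) q = q := by
      rw [Zdet, Matrix.det_fin_one]
      simp [lapOf, pathAdj, Matrix.one_apply]
    rw [h1]
    have := Spoly_diff q 0
    rw [Spoly_one, Spoly_zero] at this
    simpa using this.symm
  | (m+2), _ =>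
    have hmain : Zdet (pathAdj (m+2)) (fun _ _ => (1 : ℝ)) q
        = Spoly q (m+2) - Spoly q (m+1) := by
      rw [Zdet, matrix_eq (m+2) (by omega) q, Tm_rec]
      have hd0 : (if ((0 : Fin (m+2)) : ℕ) = 0 ∨ ((0 : Fin (m+2)) : ℕ) + 1 = m+2
          then q+1 else q+2) = q+1 := by
        have : ((0 : Fin (m+2)) : ℕ) = 0 := Fin.val_zero _
        rw [if_pos (Or.inl this)]
      have hs1 : (fun i : Fin (m+1) =>
          if ((i.succ : Fin (m+2)) : ℕ) = 0 ∨ ((i.succ : Fin (m+2)) : ℕ) + 1 = m+2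
            then q+1 else q+2)
          = dB q (m+1) := by
        funext i
        simp only [dB, Fin.val_succ]
        split_ifs <;>
      first | rfl | (exfalso; omega) | (exfalso; simp_all only [false_or, or_false]; omega)
      have hs2 : (fun i : Fin m =>
          if ((i.succ.succ : Fin (m+2)) : ℕ) = 0 ∨ ((i.succ.succ : Fin (m+2)) : ℕ) + 1 = m+2
            then q+1 else q+2)
          = dB q m := by
        funext i
        simp only [dB, Fin.val_succ]
        split_ifs <;>
      first | rfl | (exfalso; omega) | (exfalso; simp_all only [false_or, or_false]; omega)
      rw [hd0, hs1, hs2]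
      have e1 : (Tm (m+1) (dB q (m+1))).det = Bdet q (m+1) := rfl
      have e2 : (Tm m (dB q m)).det = Bdet q m := rfl
      rw [e1, e2, Bdet_eq_Spoly, Bdet_eq_Spoly, Spoly_rec q m]
      ring
    rw [hmain, Spoly_diff q (m+1)]
  end
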